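/- Let H = ℝⁿ, let S : ℝⁿ × ℝ^m → ℝ be convex and continuous, h : ℝⁿ → ℝ convex and continuously differentiable, and L an invertible m × m real matrix. Define U := {x ∈ ℝⁿ : S(x,0) < h(x)}, and for λ > 0 define ρ_λ(x,v) := sup{ r > 0 : M_λS(x, r·Lv) ≤ h(x) } ∈ (0, +∞] and ρ₀(x,v) := sup{ r > 0 : S(x, r·Lv) ≤ h(x) } ∈ (0, +∞]. Then ρ is jointly continuous in (λ, x, v): for every sequence (λ_k, x_k, v_k) → (λ, x, v) ∈ [0,∞) × U × 𝕊^{m−1} with λ_k > 0, one has ρ_{λ_k}(x_k, v_k) → ρ_λ(x, v) in [0, +∞] (where convergence to +∞ is allowed). (Proposition 4.1.) -/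

import Mathlib

open Filter Topology Set
set_option maxHeartbeats 1000000
open scoped RealInnerProductSpace

lemma convex_combo_pos {t t' lam lam' : ℝ} (ht : 0 ≤ t) (ht' : 0 ≤ t') (htt' : t + t' = 1)
    (hl : 0 < lam) (hl' : 0 < lam') : 0 < t*lam + t'*lam' := by
  rcases ht.lt_or_eq with h | h
  · nlinarith [mul_nonneg ht' hl'.le, mul_pos h hl]
  · have : t' = 1 := by linarith
    rw [← h, this]; simpa using hl'

/-- Scalar perspective-type inequality. -/
lemma persp_scalar {t t' lam lam' a b : ℝ} (ht : 0 ≤ t) (ht' : 0 ≤ t') (htt' : t + t' = 1)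
    (hl : 0 < lam) (hl' : 0 < lam') :
    (t*a + t'*b)^2 / (t*lam + t'*lam') ≤ t*(a^2/lam) + t'*(b^2/lam') := by
  have hd : 0 < t*lam + t'*lam' := convex_combo_pos ht ht' htt' hl hl'
  rw [div_le_iff₀ hd]
  have key : (t*(a^2/lam) + t'*(b^2/lam')) * (t*lam + t'*lam') - (t*a + t'*b)^2
      = t*t' * (a*lam' - b*lam)^2 / (lam*lam') := by
    field_simp
    ring
  nlinarith [div_nonneg (mul_nonneg (mul_nonneg ht ht') (sq_nonneg (a*lam' - b*lam)))
    (le_of_lt (mul_pos hl hl'))]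

lemma persp_norm {V : Type*} [NormedAddCommGroup V] [NormedSpace ℝ V]
    (d d' : V) {t t' lam lam' : ℝ} (ht : 0 ≤ t) (ht' : 0 ≤ t') (htt' : t + t' = 1)
    (hl : 0 < lam) (hl' : 0 < lam') :
    ‖t•d + t'•d'‖^2 / (2*(t*lam + t'*lam')) ≤ t*(‖d‖^2/(2*lam)) + t'*(‖d'‖^2/(2*lam')) := by
  have hd : 0 < t*lam + t'*lam' := convex_combo_pos ht ht' htt' hl hl'
  have h1 : ‖t•d + t'•d'‖ ≤ t*‖d‖ + t'*‖d'‖ := by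
    calc ‖t•d + t'•d'‖ ≤ ‖t•d‖ + ‖t'•d'‖ := norm_add_le _ _
    _ = t*‖d‖ + t'*‖d'‖ := by rw [norm_smul, norm_smul, Real.norm_eq_abs, Real.norm_eq_abs,
        abs_of_nonneg ht, abs_of_nonneg ht']
  have h2 : ‖t•d + t'•d'‖^2 ≤ (t*‖d‖ + t'*‖d'‖)^2 := by
    have := norm_nonneg (t•d + t'•d')
    nlinarith
  have h3 := persp_scalar (a := ‖d‖) (b := ‖d'‖) ht ht' htt' hl hl'
  have h4 : ‖t•d + t'•d'‖^2/(t*lam + t'*lam') ≤ (t*‖d‖ + t'*‖d'‖)^2/(t*lam + t'*lam') :=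
    div_le_div_of_nonneg_right h2 hd.le
  have e1 : ‖t•d + t'•d'‖^2/(2*(t*lam + t'*lam')) = (‖t•d + t'•d'‖^2/(t*lam + t'*lam'))/2 := by
    rw [mul_comm, ← div_div]
  have e2 : t*(‖d‖^2/(2*lam)) = (t*(‖d‖^2/lam))/2 := by
    rw [mul_comm 2 lam, ← div_div]; ring
  have e3 : t'*(‖d'‖^2/(2*lam')) = (t'*(‖d'‖^2/lam'))/2 := by
    rw [mul_comm 2 lam', ← div_div]; ring
  rw [e1, e2, e3]
  linarith

/-- quadratic lower bound for inner products -/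
lemma inner_le_quad {V : Type*} [NormedAddCommGroup V] [InnerProductSpace ℝ V]
    (b d : V) {lam : ℝ} (hl : 0 < lam) :
    ⟪b, d⟫ ≤ lam*‖b‖^2/2 + ‖d‖^2/(2*lam) := by
  have hexp := norm_sub_sq_real d (lam • b)
  rw [real_inner_smul_right, norm_smul, Real.norm_eq_abs, mul_pow, sq_abs] at hexp
  have h0 : (0:ℝ) ≤ ‖d‖^2 - 2*(lam*⟪d,b⟫) + lam^2*‖b‖^2 := by
    rw [← hexp]; positivity
  have key : lam*‖b‖^2/2 + ‖d‖^2/(2*lam) - ⟪b,d⟫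
      = (‖d‖^2 - 2*(lam*⟪d,b⟫) + lam^2*‖b‖^2)/(2*lam) := by
    rw [real_inner_comm b d]
    field_simp
    ring
  nlinarith [div_nonneg h0 (by positivity : (0:ℝ) ≤ 2*lam)]

lemma exists_subgradient {W : Type*} [NormedAddCommGroup W] [NormedSpace ℝ W]
    (f : W → ℝ) (hconv : ConvexOn ℝ Set.univ f) (hcont : Continuous f) (a : W) :
    ∃ g : W →L[ℝ] ℝ, ∀ u, f a + g (u - a) ≤ f u := by
  set s : Set (W × ℝ) := {p | f p.1 < p.2} with hs
  have hopen : IsOpen s := isOpen_lt (hcont.comp continuous_fst) continuous_snd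
  have hconvs : Convex ℝ s := by
    rintro ⟨u, t⟩ hu ⟨u', t'⟩ hu' c d hc hd hcd
    simp only [hs, Set.mem_setOf_eq, Prod.smul_mk, Prod.mk_add_mk, Prod.fst_add, Prod.snd_add] at hu hu' ⊢
    have hmain := hconv.2 (Set.mem_univ u) (Set.mem_univ u') hc hd hcd
    simp only [smul_eq_mul] at hmain ⊢
    refine hmain.trans_lt ?_
    rcases hc.lt_or_eq with h | h
    · have h1 : c * f u < c * t := by exact mul_lt_mul_of_pos_left hu h
      have h2 : d * f u' ≤ d * t' := mul_le_mul_of_nonneg_left hu'.le hd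
      linarith
    · have : d = 1 := by linarith
      rw [← h, this]; simpa using hu'
  have hnot : (a, f a) ∉ s := by simp [hs]
  obtain ⟨φ, hφ⟩ := geometric_hahn_banach_open_point hconvs hopen hnot
  set c := φ (0, 1) with hcdef
  have hlin : ∀ (u : W) (t : ℝ), φ (u, t) = φ (u, 0) + t * c := by
    intro u t
    have : (u, t) = (u, (0:ℝ)) + t • ((0:W), (1:ℝ)) := by
      simp [Prod.ext_iff]
    rw [this, map_add, map_smul, smul_eq_mul]
  have hcneg : c < 0 := by
    have h1 := hφ (a, f a + 1) (by simp [hs])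
    rw [hlin a (f a + 1), hlin a (f a)] at h1
    linarith
  have hkey : ∀ u, φ (u, 0) + f u * c ≤ φ (a, 0) + f a * c := by
    intro u
    by_contra hlt
    push_neg at hlt
    set ε := (φ (u, 0) + f u * c - (φ (a, 0) + f a * c)) / (-c) with hε
    have hεpos : 0 < ε := div_pos (by linarith) (by linarith)
    have h2 := hφ (u, f u + ε) (by simp [hs, hεpos])
    rw [hlin u (f u + ε), hlin a (f a)] at h2
    have hεc : ε * (-c) = φ (u, 0) + f u * c - (φ (a, 0) + f a * c) := by
      rw [hε, div_mul_cancel₀]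
      linarith
    nlinarith
  refine ⟨(-c)⁻¹ • (φ.comp (ContinuousLinearMap.inl ℝ W ℝ)), fun u => ?_⟩
  have hsub : φ (u - a, (0:ℝ)) = φ (u, 0) - φ (a, 0) := by
    have : ((u - a, (0:ℝ)) : W × ℝ) = (u, 0) - (a, 0) := by simp [Prod.ext_iff]
    rw [this, map_sub]
  have hcpos : 0 < -c := by linarith
  have hk := hkey u
  simp only [ContinuousLinearMap.smul_apply, ContinuousLinearMap.comp_apply,
    ContinuousLinearMap.inl_apply, smul_eq_mul]
  rw [hsub, inv_mul_eq_div]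
  have hd : (φ (u, 0) - φ (a, 0)) / -c ≤ f u - f a := by
    rw [div_le_iff₀ hcpos]
    nlinarith
  linarith

/-- Moreau envelope of `S : ℝⁿ × ℝ^m → ℝ` in two arguments. -/
noncomputable def moreauEnv2 {H E : Type*} [NormedAddCommGroup H] [InnerProductSpace ℝ H]
    [NormedAddCommGroup E] [InnerProductSpace ℝ E]
    (S : H → E → ℝ) (lam : ℝ) (x : H) (z : E) : ℝ :=
  ⨅ u : H × E, (S u.1 u.2 + (‖x - u.1‖ ^ 2 + ‖z - u.2‖ ^ 2) / (2 * lam))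

section Moreau

variable {H E : Type*} [NormedAddCommGroup H] [InnerProductSpace ℝ H]
  [NormedAddCommGroup E] [InnerProductSpace ℝ E]
variable [CompleteSpace H] [CompleteSpace E]
variable {S : H → E → ℝ}

lemma moreau_pointwise_lb (hSconv : ConvexOn ℝ Set.univ fun q : H × E => S q.1 q.2)
    (hScont : Continuous fun q : H × E => S q.1 q.2) (a : H × E) :
    ∃ (b1 : H) (b2 : E), ∀ lam : ℝ, 0 < lam → ∀ (x : H) (z : E) (u : H × E),
      S a.1 a.2 + ⟪b1, x - a.1⟫ + ⟪b2, z - a.2⟫ - lam * (‖b1‖^2 + ‖b2‖^2)/2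
        ≤ S u.1 u.2 + (‖x - u.1‖ ^ 2 + ‖z - u.2‖ ^ 2) / (2 * lam) := by
  obtain ⟨g, hg⟩ := exists_subgradient (fun q : H × E => S q.1 q.2) hSconv hScont a
  set b1 : H := (InnerProductSpace.toDual ℝ H).symm (g.comp (ContinuousLinearMap.inl ℝ H E))
    with hb1def
  set b2 : E := (InnerProductSpace.toDual ℝ E).symm (g.comp (ContinuousLinearMap.inr ℝ H E))
    with hb2def
  have hb1 : ∀ y : H, ⟪b1, y⟫ = g (y, 0) := by
    intro y
    rw [hb1def, InnerProductSpace.toDual_symm_apply]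
    rfl
  have hb2 : ∀ y : E, ⟪b2, y⟫ = g (0, y) := by
    intro y
    rw [hb2def, InnerProductSpace.toDual_symm_apply]
    rfl
  have hsplit : ∀ p : H × E, g p = ⟪b1, p.1⟫ + ⟪b2, p.2⟫ := by
    intro p
    rw [hb1, hb2, ← map_add]
    congr 1
    simp [Prod.ext_iff]
  refine ⟨b1, b2, fun lam hl x z u => ?_⟩
  have h1 := hg u
  rw [hsplit (u - a)] at h1
  have e1 : (u - a).1 = u.1 - a.1 := rfl
  have e2 : (u - a).2 = u.2 - a.2 := rfl
  rw [e1, e2] at h1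
  have q1 : ⟪b1, x - u.1⟫ ≤ lam*‖b1‖^2/2 + ‖x - u.1‖^2/(2*lam) := inner_le_quad b1 _ hl
  have q2 : ⟪b2, z - u.2⟫ ≤ lam*‖b2‖^2/2 + ‖z - u.2‖^2/(2*lam) := inner_le_quad b2 _ hl
  have d1 : ⟪b1, x - a.1⟫ - ⟪b1, u.1 - a.1⟫ = ⟪b1, x - u.1⟫ := by
    rw [← inner_sub_right]
    congr 1
    abel
  have d2 : ⟪b2, z - a.2⟫ - ⟪b2, u.2 - a.2⟫ = ⟪b2, z - u.2⟫ := by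
    rw [← inner_sub_right]
    congr 1
    abel
  have r1 : lam*(‖b1‖^2+‖b2‖^2)/2 = lam*‖b1‖^2/2 + lam*‖b2‖^2/2 := by ring
  have r2 : (‖x - u.1‖^2+‖z - u.2‖^2)/(2*lam)
      = ‖x - u.1‖^2/(2*lam) + ‖z - u.2‖^2/(2*lam) := by ring
  linarith

lemma moreau_bddBelow (hSconv : ConvexOn ℝ Set.univ fun q : H × E => S q.1 q.2)
    (hScont : Continuous fun q : H × E => S q.1 q.2) {lam : ℝ} (hl : 0 < lam) (x : H) (z : E) :
    BddBelow (Set.range fun u : H × E =>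
      S u.1 u.2 + (‖x - u.1‖ ^ 2 + ‖z - u.2‖ ^ 2) / (2 * lam)) := by
  obtain ⟨b1, b2, hb⟩ := moreau_pointwise_lb hSconv hScont (x, z)
  exact ⟨_, by rintro y ⟨u, rfl⟩; exact hb lam hl x z u⟩

lemma moreau_le_self (hSconv : ConvexOn ℝ Set.univ fun q : H × E => S q.1 q.2)
    (hScont : Continuous fun q : H × E => S q.1 q.2) {lam : ℝ} (hl : 0 < lam) (x : H) (z : E) :
    moreauEnv2 S lam x z ≤ S x z := by
  have := ciInf_le (moreau_bddBelow hSconv hScont hl x z) ((x, z) : H × E)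
  simpa [moreauEnv2] using this

lemma moreau_convexOn (hSconv : ConvexOn ℝ Set.univ fun q : H × E => S q.1 q.2)
    (hScont : Continuous fun q : H × E => S q.1 q.2) :
    ConvexOn ℝ (Set.Ioi (0:ℝ) ×ˢ (Set.univ : Set (H × E)))
      (fun p : ℝ × (H × E) => moreauEnv2 S p.1 p.2.1 p.2.2) := by
  constructor
  · exact (convex_Ioi 0).prod convex_univ
  rintro ⟨lam, w⟩ ⟨hlam, -⟩ ⟨lam', w'⟩ ⟨hlam', -⟩ t t' ht ht' htt'
  simp only [Set.mem_Ioi] at hlam hlam'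
  simp only [Prod.smul_mk, Prod.mk_add_mk, smul_eq_mul, Prod.fst_add, Prod.snd_add,
    Prod.smul_fst, Prod.smul_snd]
  have hmix : 0 < t*lam + t'*lam' := convex_combo_pos ht ht' htt' hlam hlam'
  apply le_of_forall_pos_le_add
  intro ε hε
  obtain ⟨u, hu⟩ : ∃ u : H × E, S u.1 u.2 + (‖w.1 - u.1‖^2 + ‖w.2 - u.2‖^2)/(2*lam)
      < moreauEnv2 S lam w.1 w.2 + ε/2 :=
    exists_lt_of_ciInf_lt (lt_add_of_pos_right _ (by linarith))
  obtain ⟨u', hu'⟩ : ∃ u' : H × E, S u'.1 u'.2 + (‖w'.1 - u'.1‖^2 + ‖w'.2 - u'.2‖^2)/(2*lam')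
      < moreauEnv2 S lam' w'.1 w'.2 + ε/2 :=
    exists_lt_of_ciInf_lt (lt_add_of_pos_right _ (by linarith))
  have hmono : moreauEnv2 S (t*lam+t'*lam') (t•w.1+t'•w'.1) (t•w.2+t'•w'.2)
      ≤ S (t•u+t'•u').1 (t•u+t'•u').2
        + (‖(t•w.1+t'•w'.1) - (t•u+t'•u').1‖^2
          + (‖(t•w.2+t'•w'.2) - (t•u+t'•u').2‖^2))/(2*(t*lam+t'*lam')) :=
    ciInf_le (moreau_bddBelow hSconv hScont hmix _ _) _
  have hF : S (t•u+t'•u').1 (t•u+t'•u').2 ≤ t * S u.1 u.2 + t' * S u'.1 u'.2 := by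
    have := hSconv.2 (Set.mem_univ u) (Set.mem_univ u') ht ht' htt'
    simpa using this
  have hd1 : (t•w.1+t'•w'.1) - (t•u+t'•u').1 = t•(w.1 - u.1) + t'•(w'.1 - u'.1) := by
    simp only [Prod.fst_add, Prod.smul_fst, smul_sub]
    abel
  have hd2 : (t•w.2+t'•w'.2) - (t•u+t'•u').2 = t•(w.2 - u.2) + t'•(w'.2 - u'.2) := by
    simp only [Prod.snd_add, Prod.smul_snd, smul_sub]
    abel
  have p1 := persp_norm (w.1 - u.1) (w'.1 - u'.1) ht ht' htt' hlam hlam'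
  have p2 := persp_norm (w.2 - u.2) (w'.2 - u'.2) ht ht' htt' hlam hlam'
  rw [hd1, hd2] at hmono
  have m1 := mul_le_mul_of_nonneg_left hu.le ht
  have m2 := mul_le_mul_of_nonneg_left hu'.le ht'
  have r0 : (‖t•(w.1 - u.1) + t'•(w'.1 - u'.1)‖^2 + ‖t•(w.2 - u.2) + t'•(w'.2 - u'.2)‖^2)
        /(2*(t*lam+t'*lam'))
      = ‖t•(w.1 - u.1) + t'•(w'.1 - u'.1)‖^2/(2*(t*lam+t'*lam'))
        + ‖t•(w.2 - u.2) + t'•(w'.2 - u'.2)‖^2/(2*(t*lam+t'*lam')) := by ring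
  have r1 : t * (S u.1 u.2 + (‖w.1 - u.1‖^2 + ‖w.2 - u.2‖^2)/(2*lam))
      = t * S u.1 u.2 + t*(‖w.1 - u.1‖^2/(2*lam)) + t*(‖w.2 - u.2‖^2/(2*lam)) := by ring
  have r2 : t' * (S u'.1 u'.2 + (‖w'.1 - u'.1‖^2 + ‖w'.2 - u'.2‖^2)/(2*lam'))
      = t' * S u'.1 u'.2 + t'*(‖w'.1 - u'.1‖^2/(2*lam')) + t'*(‖w'.2 - u'.2‖^2/(2*lam')) := by ring
  have r3 : t * (moreauEnv2 S lam w.1 w.2 + ε/2) = t * moreauEnv2 S lam w.1 w.2 + t*(ε/2) := by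
    ring
  have r4 : t' * (moreauEnv2 S lam' w'.1 w'.2 + ε/2) = t' * moreauEnv2 S lam' w'.1 w'.2
      + t'*(ε/2) := by ring
  have r5 : t*(ε/2) + t'*(ε/2) = ε/2 := by
    rw [← add_mul, htt', one_mul]
  have hε2 : ε/2 ≤ ε := by linarith
  rw [r0] at hmono
  rw [r1] at m1
  rw [r2] at m2
  rw [r3] at m1
  rw [r4] at m2
  linarith

lemma moreau_continuousOn [FiniteDimensional ℝ H] [FiniteDimensional ℝ E]
    (hSconv : ConvexOn ℝ Set.univ fun q : H × E => S q.1 q.2)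
    (hScont : Continuous fun q : H × E => S q.1 q.2) :
    ContinuousOn (fun p : ℝ × (H × E) => moreauEnv2 S p.1 p.2.1 p.2.2)
      (Set.Ioi (0:ℝ) ×ˢ (Set.univ : Set (H × E))) :=
  ConvexOn.continuousOn (isOpen_Ioi.prod isOpen_univ) (moreau_convexOn hSconv hScont)

lemma moreau_tendsto_zero (hSconv : ConvexOn ℝ Set.univ fun q : H × E => S q.1 q.2)
    (hScont : Continuous fun q : H × E => S q.1 q.2) {w : H × E} {lamk : ℕ → ℝ}
    {wk : ℕ → H × E} (hpos : ∀ k, 0 < lamk k) (hlam : Tendsto lamk atTop (𝓝 0))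
    (hw : Tendsto wk atTop (𝓝 w)) :
    Tendsto (fun k => moreauEnv2 S (lamk k) (wk k).1 (wk k).2) atTop (𝓝 (S w.1 w.2)) := by
  obtain ⟨b1, b2, hb⟩ := moreau_pointwise_lb hSconv hScont w
  have hlow : ∀ k, S w.1 w.2 + ⟪b1, (wk k).1 - w.1⟫ + ⟪b2, (wk k).2 - w.2⟫
      - lamk k * (‖b1‖^2 + ‖b2‖^2)/2 ≤ moreauEnv2 S (lamk k) (wk k).1 (wk k).2 :=
    fun k => le_ciInf (fun u => hb _ (hpos k) _ _ u)
  have hup : ∀ k, moreauEnv2 S (lamk k) (wk k).1 (wk k).2 ≤ S (wk k).1 (wk k).2 :=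
    fun k => moreau_le_self hSconv hScont (hpos k) _ _
  have h1 : Tendsto (fun k => (wk k).1) atTop (𝓝 w.1) := (continuous_fst.tendsto w).comp hw
  have h2 : Tendsto (fun k => (wk k).2) atTop (𝓝 w.2) := (continuous_snd.tendsto w).comp hw
  have t1 : Tendsto (fun k => ⟪b1, (wk k).1 - w.1⟫) atTop (𝓝 0) := by
    have hc : Continuous fun y : H => ⟪b1, y - w.1⟫ :=
      continuous_const.inner (continuous_id.sub continuous_const)
    have := (hc.tendsto w.1).comp h1
    simpa [Function.comp_def] using this
  have t2 : Tendsto (fun k => ⟪b2, (wk k).2 - w.2⟫) atTop (𝓝 0) := by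
    have hc : Continuous fun y : E => ⟪b2, y - w.2⟫ :=
      continuous_const.inner (continuous_id.sub continuous_const)
    have := (hc.tendsto w.2).comp h2
    simpa [Function.comp_def] using this
  have t3 : Tendsto (fun k => lamk k * (‖b1‖^2 + ‖b2‖^2)/2) atTop (𝓝 0) := by
    have := (hlam.mul_const ((‖b1‖^2 + ‖b2‖^2))).div_const 2
    simpa using this
  have hlt : Tendsto (fun k => S w.1 w.2 + ⟪b1, (wk k).1 - w.1⟫ + ⟪b2, (wk k).2 - w.2⟫
      - lamk k * (‖b1‖^2 + ‖b2‖^2)/2) atTop (𝓝 (S w.1 w.2)) := by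
    have hbase : Tendsto (fun _ : ℕ => S w.1 w.2) atTop (𝓝 (S w.1 w.2)) := tendsto_const_nhds
    have := ((hbase.add t1).add t2).sub t3
    simpa using this
  exact tendsto_of_tendsto_of_tendsto_of_le_of_le hlt ((hScont.tendsto w).comp hw) hlow hup

end Moreau

section RayLemmas

lemma ray_le_aux (φ : ℝ → ℝ) (hφ : ConvexOn ℝ Set.univ φ) (c r r' : ℝ)
    (h0 : φ 0 ≤ c) (hr'c : φ r' ≤ c) (hr : 0 ≤ r) (hrr' : r ≤ r') : φ r ≤ c := by
  rcases eq_or_lt_of_le (hr.trans hrr') with h | h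
  · have hzero : r = 0 := le_antisymm (hrr'.trans h.symm.le) hr
    rw [hzero]; exact h0
  · have hne : r' ≠ 0 := ne_of_gt h
    have ht1 : (0:ℝ) ≤ 1 - r/r' := by rw [sub_nonneg]; exact (div_le_one h).2 hrr'
    have ht0 : (0:ℝ) ≤ r/r' := by positivity
    have hab : (1 - r/r') + r/r' = 1 := by ring
    have key := hφ.2 (Set.mem_univ (0:ℝ)) (Set.mem_univ r') ht1 ht0 hab
    simp only [smul_eq_mul, mul_zero, zero_add] at key
    rw [div_mul_cancel₀ r hne] at key
    have hsum : (1 - r/r')*c + (r/r')*c = c := by ring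
    nlinarith [mul_le_mul_of_nonneg_left h0 ht1, mul_le_mul_of_nonneg_left hr'c ht0]

lemma ray_lt_aux (φ : ℝ → ℝ) (hφ : ConvexOn ℝ Set.univ φ) (c r r' : ℝ)
    (h0 : φ 0 < c) (hr'c : φ r' ≤ c) (hr : 0 < r) (hrr' : r < r') : φ r < c := by
  have h : (0:ℝ) < r' := hr.trans hrr'
  have hne : r' ≠ 0 := ne_of_gt h
  have ht0 : (0:ℝ) < r/r' := by positivity
  have ht1 : (0:ℝ) < 1 - r/r' := by
    rw [sub_pos]; exact (div_lt_one h).2 hrr'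
  have hab : (1 - r/r') + r/r' = 1 := by ring
  have key := hφ.2 (Set.mem_univ (0:ℝ)) (Set.mem_univ r') ht1.le ht0.le hab
  simp only [smul_eq_mul, mul_zero, zero_add] at key
  rw [div_mul_cancel₀ r hne] at key
  have hsum : (1 - r/r')*c + (r/r')*c = c := by ring
  nlinarith [mul_lt_mul_of_pos_left h0 ht1, mul_le_mul_of_nonneg_left hr'c ht0.le]

end RayLemmas

/-- Proposition 4.1 (joint continuity of the radial function): with `S` convex continuous,
`h` convex `C¹`, `L` an invertible linear map of `ℝ^m`, `M λ = M_λS` for `λ > 0` and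
`M 0 = S`, and `ρ_λ(x,v) = sup{ r > 0 : M λ (x, r·Lv) ≤ h(x) } ∈ (0,+∞]` (an `EReal`-valued
supremum), for every sequence `(λ_k, x_k, v_k) → (λ, x, v) ∈ [0,∞) × U × 𝕊^{m−1}` with
`λ_k > 0`, where `U = {x : S(x,0) < h(x)}`, one has `ρ_{λ_k}(x_k,v_k) → ρ_λ(x,v)` in
`[0,+∞]`. -/
theorem stmt11 {n m : ℕ}
    (S : EuclideanSpace ℝ (Fin n) → EuclideanSpace ℝ (Fin m) → ℝ)
    (hSconv : ConvexOn ℝ Set.univ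
      fun q : EuclideanSpace ℝ (Fin n) × EuclideanSpace ℝ (Fin m) => S q.1 q.2)
    (hScont : Continuous
      fun q : EuclideanSpace ℝ (Fin n) × EuclideanSpace ℝ (Fin m) => S q.1 q.2)
    (h : EuclideanSpace ℝ (Fin n) → ℝ) (hconv : ConvexOn ℝ Set.univ h)
    (hC1 : ContDiff ℝ 1 h)
    (L : EuclideanSpace ℝ (Fin m) ≃L[ℝ] EuclideanSpace ℝ (Fin m))
    (M : ℝ → EuclideanSpace ℝ (Fin n) → EuclideanSpace ℝ (Fin m) → ℝ)
    (hM0 : ∀ x z, M 0 x z = S x z)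
    (hMpos : ∀ lam : ℝ, 0 < lam → ∀ x z, M lam x z = moreauEnv2 S lam x z)
    (rho : ℝ → EuclideanSpace ℝ (Fin n) → EuclideanSpace ℝ (Fin m) → EReal)
    (hrho : ∀ lam x v, rho lam x v =
      sSup {e : EReal | ∃ r : ℝ, 0 < r ∧ e = (r : EReal) ∧ M lam x (r • L v) ≤ h x}) :
    ∀ lam : ℝ, 0 ≤ lam → ∀ x : EuclideanSpace ℝ (Fin n), S x 0 < h x →
    ∀ v : EuclideanSpace ℝ (Fin m), ‖v‖ = 1 →
    ∀ (lamk : ℕ → ℝ) (xk : ℕ → EuclideanSpace ℝ (Fin n))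
      (vk : ℕ → EuclideanSpace ℝ (Fin m)),
      (∀ k, 0 < lamk k) → Tendsto lamk atTop (𝓝 lam) →
      Tendsto xk atTop (𝓝 x) → Tendsto vk atTop (𝓝 v) →
      Tendsto (fun k => rho (lamk k) (xk k) (vk k)) atTop (𝓝 (rho lam x v)) := by
  intro lam hlam0 x hxU v hv lamk xk vk hlampos hlamt hxkt hvkt
  have hcont_h : Continuous h := hC1.continuous
  have hhx : Tendsto (fun k => h (xk k)) atTop (𝓝 (h x)) := (hcont_h.tendsto x).comp hxkt
  have hS0 : Tendsto (fun k => S (xk k) 0) atTop (𝓝 (S x 0)) := by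
    have := (hScont.tendsto (x, (0 : EuclideanSpace ℝ (Fin m)))).comp
      (hxkt.prodMk_nhds tendsto_const_nhds)
    exact this
  have hevS : ∀ᶠ k in atTop, S (xk k) 0 < h (xk k) := hS0.eventually_lt hhx hxU
  -- convergence of the envelopes along the sequence
  have Mtend : ∀ (zk : ℕ → EuclideanSpace ℝ (Fin m)) (z : EuclideanSpace ℝ (Fin m)),
      Tendsto zk atTop (𝓝 z) →
      Tendsto (fun k => M (lamk k) (xk k) (zk k)) atTop (𝓝 (M lam x z)) := by
    intro zk z hz
    have hE : (fun k => M (lamk k) (xk k) (zk k))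
        = fun k => moreauEnv2 S (lamk k) (xk k) (zk k) := by
      funext k; exact hMpos _ (hlampos k) _ _
    rw [hE]
    rcases hlam0.lt_or_eq with hp | h0
    · rw [hMpos lam hp]
      have hcontE := moreau_continuousOn (S := S) hSconv hScont
      have hmem : ((lam, (x, z)) : ℝ × (EuclideanSpace ℝ (Fin n) × EuclideanSpace ℝ (Fin m)))
          ∈ Set.Ioi (0:ℝ) ×ˢ (Set.univ : Set (EuclideanSpace ℝ (Fin n) × EuclideanSpace ℝ (Fin m)))
        := ⟨hp, trivial⟩
      have hCA := hcontE.continuousAt ((isOpen_Ioi.prod isOpen_univ).mem_nhds hmem)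
      have h2 := hCA.tendsto.comp (hlamt.prodMk_nhds (hxkt.prodMk_nhds hz))
      simpa [Function.comp_def] using h2
    · subst h0
      rw [hM0]
      have h2 := moreau_tendsto_zero hSconv hScont hlampos hlamt (hxkt.prodMk_nhds hz)
      simpa using h2
  -- ray convexity of M
  have Mconv : ∀ l : ℝ, 0 ≤ l → ∀ (x' : EuclideanSpace ℝ (Fin n))
      (z : EuclideanSpace ℝ (Fin m)),
      ConvexOn ℝ Set.univ (fun r : ℝ => M l x' (r • z)) := by
    intro l hl x' z
    rcases hl.lt_or_eq with hp | h0
    · refine ⟨convex_univ, fun r1 _ r2 _ a b ha hb hab => ?_⟩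
      simp only [hMpos l hp, smul_eq_mul]
      have hx'' : a • x' + b • x' = x' := by rw [← add_smul, hab, one_smul]
      have hz'' : a • (r1 • z) + b • (r2 • z) = (a*r1 + b*r2) • z := by
        rw [smul_smul, smul_smul, ← add_smul]
      have hl'' : a * l + b * l = l := by rw [← add_mul, hab, one_mul]
      have hmem1 : ((l, (x', r1 • z)) : ℝ × (EuclideanSpace ℝ (Fin n) × EuclideanSpace ℝ (Fin m)))
          ∈ Set.Ioi (0:ℝ) ×ˢ (Set.univ : Set (EuclideanSpace ℝ (Fin n) ×
            EuclideanSpace ℝ (Fin m))) := ⟨hp, trivial⟩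
      have hmem2 : ((l, (x', r2 • z)) : ℝ × (EuclideanSpace ℝ (Fin n) × EuclideanSpace ℝ (Fin m)))
          ∈ Set.Ioi (0:ℝ) ×ˢ (Set.univ : Set (EuclideanSpace ℝ (Fin n) ×
            EuclideanSpace ℝ (Fin m))) := ⟨hp, trivial⟩
      have key := (moreau_convexOn (S := S) hSconv hScont).2 hmem1 hmem2 ha hb hab
      simp only [Prod.smul_mk, Prod.mk_add_mk, smul_eq_mul] at key
      rw [hx'', hz'', hl''] at key
      exact key
    · subst h0
      refine ⟨convex_univ, fun r1 _ r2 _ a b ha hb hab => ?_⟩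
      simp only [hM0, smul_eq_mul]
      have hx'' : a • x' + b • x' = x' := by rw [← add_smul, hab, one_smul]
      have hz'' : a • (r1 • z) + b • (r2 • z) = (a*r1 + b*r2) • z := by
        rw [smul_smul, smul_smul, ← add_smul]
      have key := hSconv.2 (Set.mem_univ ((x', r1 • z))) (Set.mem_univ ((x', r2 • z))) ha hb hab
      simp only [Prod.smul_mk, Prod.mk_add_mk, smul_eq_mul] at key
      rw [hx'', hz''] at key
      exact key
  -- value at the center
  have hM00 : M lam x 0 < h x := by
    rcases hlam0.lt_or_eq with hp | h0
    · rw [hMpos lam hp]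
      exact (moreau_le_self hSconv hScont hp x 0).trans_lt hxU
    · rw [← h0, hM0]; exact hxU
  have hM0k : ∀ᶠ k in atTop, M (lamk k) (xk k) 0 ≤ h (xk k) := by
    filter_upwards [hevS] with k hk
    rw [hMpos _ (hlampos k)]
    exact (moreau_le_self hSconv hScont (hlampos k) _ _).trans hk.le
  -- continuity in the radial variable at the limit point
  have hφcont : ContinuousAt (fun t : ℝ => M lam x (t • (L v))) 0 := by
    rcases hlam0.lt_or_eq with hp | h0
    · have heq : (fun t : ℝ => M lam x (t • (L v)))
          = fun t => moreauEnv2 S lam x (t • (L v)) := by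
        funext t; exact hMpos lam hp x _
      rw [heq]
      have hcontE := moreau_continuousOn (S := S) hSconv hScont
      have hmem : ((lam, (x, (0:ℝ) • (L v))) :
          ℝ × (EuclideanSpace ℝ (Fin n) × EuclideanSpace ℝ (Fin m)))
          ∈ Set.Ioi (0:ℝ) ×ˢ (Set.univ : Set (EuclideanSpace ℝ (Fin n) ×
            EuclideanSpace ℝ (Fin m))) := ⟨hp, trivial⟩
      have hCA := hcontE.continuousAt ((isOpen_Ioi.prod isOpen_univ).mem_nhds hmem)
      have hg : ContinuousAt (fun t : ℝ =>
          ((lam, (x, t • (L v))) : ℝ × (EuclideanSpace ℝ (Fin n) × EuclideanSpace ℝ (Fin m))))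
          0 :=
        (continuous_const.prodMk (continuous_const.prodMk
          (continuous_id.smul continuous_const))).continuousAt
      have h2 := hCA.tendsto.comp hg.tendsto
      simpa [ContinuousAt, Function.comp_def] using h2
    · have heq : (fun t : ℝ => M lam x (t • (L v))) = fun t => S x (t • (L v)) := by
        funext t; rw [← h0, hM0]
      rw [heq]
      exact (hScont.comp (continuous_const.prodMk
        (continuous_id.smul continuous_const))).continuousAt
  have hφ0 : ∀ᶠ t in 𝓝 (0:ℝ), M lam x (t • L v) < h x := by
    have htd : Tendsto (fun t : ℝ => M lam x (t • L v)) (𝓝 0) (𝓝 (M lam x 0)) := by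
      have := hφcont.tendsto
      simpa [zero_smul] using this
    exact htd.eventually_lt_const hM00
  have hφ0' : ∀ᶠ t in 𝓝[>] (0:ℝ), M lam x (t • L v) < h x :=
    hφ0.filter_mono nhdsWithin_le_nhds
  have hmemIoi : ∀ᶠ t in 𝓝[>] (0:ℝ), t ∈ Set.Ioi (0:ℝ) := eventually_mem_nhdsWithin
  obtain ⟨r0, hr0lt, hr0pos⟩ := (hφ0'.and hmemIoi).exists
  rw [Set.mem_Ioi] at hr0pos
  have hr0A : (r0 : EReal) ≤ sSup {e : EReal | ∃ r : ℝ, 0 < r ∧ e = (r : EReal) ∧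
      M lam x (r • L v) ≤ h x} := le_sSup ⟨r0, hr0pos, rfl, hr0lt.le⟩
  simp only [hrho]
  refine tendsto_order.2 ⟨?_, ?_⟩
  · intro b hb
    obtain ⟨e, he, hbe⟩ := lt_sSup_iff.mp hb
    obtain ⟨r', hr'pos, rfl, hMr'⟩ := he
    obtain ⟨r, hrpos, hrlt, hbr⟩ : ∃ r : ℝ, 0 < r ∧ r < r' ∧ b < (r : EReal) := by
      rcases lt_or_ge b ((r'/2 : ℝ) : EReal) with hc | hc
      · exact ⟨r'/2, by linarith, by linarith, hc⟩
      · have hbt : b ≠ ⊤ := ne_top_of_lt hbe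
        have hbb : b ≠ ⊥ := by
          intro hB
          rw [hB] at hc
          exact not_le_of_gt (EReal.bot_lt_coe _) hc
        have hbeq : (b.toReal : EReal) = b := EReal.coe_toReal hbt hbb
        have h1 : b.toReal < r' := by
          rw [← hbeq] at hbe; exact_mod_cast hbe
        have h2 : r'/2 ≤ b.toReal := by
          rw [← hbeq] at hc; exact_mod_cast hc
        refine ⟨(b.toReal + r')/2, by linarith, by linarith, ?_⟩
        rw [← hbeq]
        exact_mod_cast (by linarith : b.toReal < (b.toReal + r')/2)
    have hMlt : M lam x (r • L v) < h x := by
      have h0' : (fun t : ℝ => M lam x (t • L v)) 0 < h x := by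
        simpa [zero_smul] using hM00
      exact ray_lt_aux _ (Mconv lam hlam0 x (L v)) (h x) r r' h0' hMr' hrpos hrlt
    have hzk : Tendsto (fun k => r • L (vk k)) atTop (𝓝 (r • L v)) :=
      ((L.continuous.tendsto v).comp hvkt).const_smul r
    have hev := (Mtend _ _ hzk).eventually_lt hhx hMlt
    filter_upwards [hev] with k hk
    exact hbr.trans_le (le_sSup ⟨r, hrpos, rfl, hk.le⟩)
  · intro b hb
    obtain ⟨c, hc1, hc2⟩ := exists_between hb
    have hct : c ≠ ⊤ := ne_top_of_lt hc2
    have hcb : c ≠ ⊥ := by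
      intro hB
      rw [hB] at hc1
      exact not_lt_bot hc1
    have hceq : (c.toReal : EReal) = c := EReal.coe_toReal hct hcb
    set r := c.toReal with hrdef
    have hrpos : 0 < r := by
      have h0c : ((0:ℝ) : EReal) < c := by
        refine lt_of_le_of_lt ?_ hc1
        refine le_trans ?_ hr0A
        exact_mod_cast hr0pos.le
      rw [← hceq] at h0c
      exact_mod_cast h0c
    have hMgt : h x < M lam x (r • L v) := by
      by_contra hle
      push_neg at hle
      have hin : (r : EReal) ≤ sSup {e : EReal | ∃ r' : ℝ, 0 < r' ∧ e = (r' : EReal) ∧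
          M lam x (r' • L v) ≤ h x} := le_sSup ⟨r, hrpos, rfl, hle⟩
      rw [hceq] at hin
      exact absurd hc1 (not_lt.2 hin)
    have hzk : Tendsto (fun k => r • L (vk k)) atTop (𝓝 (r • L v)) :=
      ((L.continuous.tendsto v).comp hvkt).const_smul r
    have hev1 := hhx.eventually_lt (Mtend _ _ hzk) hMgt
    filter_upwards [hev1, hM0k] with k hk1 hk2
    refine lt_of_le_of_lt (sSup_le ?_) (hceq ▸ hc2)
    rintro e ⟨r'', hr''pos, rfl, hMr''⟩
    rw [EReal.coe_le_coe_iff]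
    by_contra hgt
    push_neg at hgt
    have h0k : (fun t : ℝ => M (lamk k) (xk k) (t • L (vk k))) 0 ≤ h (xk k) := by
      simpa [zero_smul] using hk2
    have := ray_le_aux _ (Mconv (lamk k) (hlampos k).le (xk k) (L (vk k))) (h (xk k)) r r''
      h0k hMr'' hrpos.le hgt.le
    exact absurd this (not_le.2 hk1)
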